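/- arXiv:1508.03712 — 4 statements merged into one kernel-verified Lean document; each statement's English description precedes it below -/
import Mathlib

section
/- Let Ω be a topological space, 𝒜 a collection of nonempty closed Borel subsets of Ω, and ⊥ an 𝒜-separation relation. If A₁, …, A_k ∈ 𝒜 are pairwise ⊥-separated, A′₁, …, A′_{k′} ∈ 𝒜 are pairwise ⊥-separated, and A₁ ∪ … ∪ A_k = A′₁ ∪ … ∪ A′_{k′}, then the two families coincide as sets: {A₁, …, A_k} = {A′₁, …, A′_{k′}} (in particular k = k′). -/
/-- For an `𝒜`-separation relation, two pairwise `⊥`-separated families from `𝒜`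
with the same union coincide as sets (in particular they have the same number of elements). -/
theorem separation_decomposition_unique {Ω : Type*} [TopologicalSpace Ω]
    [MeasurableSpace Ω] [BorelSpace Ω]
    (𝒜 : Set (Set Ω))
    (h𝒜 : ∀ A ∈ 𝒜, A.Nonempty ∧ IsClosed A ∧ MeasurableSet A)
    (perp : Set Ω → Set Ω → Prop)
    (hsymm : ∀ A B : Set Ω, perp A B → perp B A)
    (hrefl : ∀ B : Set Ω, perp B B → B = ∅)
    (hmono : ∀ A A' B : Set Ω, A ⊆ A' → perp A' B → perp A B)
    (hconn : ∀ A ∈ 𝒜, ∀ (k : ℕ) (B : Fin k → Set Ω), (∀ i, IsClosed (B i)) →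
      (∀ i j, i ≠ j → perp (B i) (B j)) → A ⊆ ⋃ i, B i → ∃ i, A ⊆ B i)
    (k k' : ℕ) (A : Fin k → Set Ω) (A' : Fin k' → Set Ω)
    (hA : ∀ i, A i ∈ 𝒜) (hA' : ∀ i, A' i ∈ 𝒜)
    (hAsep : ∀ i j, i ≠ j → perp (A i) (A j))
    (hA'sep : ∀ i j, i ≠ j → perp (A' i) (A' j))
    (hunion : ⋃ i, A i = ⋃ i, A' i) :
    Set.range A = Set.range A' ∧ k = k' := by
  have hne : ∀ i, (A i).Nonempty := fun i => (h𝒜 _ (hA i)).1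
  have hne' : ∀ i, (A' i).Nonempty := fun i => (h𝒜 _ (hA' i)).1
  -- every A i is contained in some A' j
  have step1 : ∀ i, ∃ j, A i ⊆ A' j := fun i =>
    hconn _ (hA i) k' A' (fun j => (h𝒜 _ (hA' j)).2.1) hA'sep
      (hunion ▸ Set.subset_iUnion A i)
  have step2 : ∀ j, ∃ i, A' j ⊆ A i := fun j =>
    hconn _ (hA' j) k A (fun i => (h𝒜 _ (hA i)).2.1) hAsep
      (hunion ▸ Set.subset_iUnion A' j)
  -- subset collapse: A i ⊆ A i' implies i = i'
  have collapse : ∀ i i', A i ⊆ A i' → i = i' := by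
    intro i i' h
    by_contra hne2
    exact (hne i).ne_empty (hrefl _ (hmono _ _ _ h (hAsep i' i (Ne.symm hne2))))
  have collapse' : ∀ j j', A' j ⊆ A' j' → j = j' := by
    intro j j' h
    by_contra hne2
    exact (hne' j).ne_empty (hrefl _ (hmono _ _ _ h (hA'sep j' j (Ne.symm hne2))))
  have key : ∀ i, ∃ j, A i = A' j := by
    intro i
    obtain ⟨j, hj⟩ := step1 i
    obtain ⟨i', hi'⟩ := step2 j
    obtain rfl := collapse i i' (hj.trans hi')
    exact ⟨j, hj.antisymm hi'⟩
  have key' : ∀ j, ∃ i, A' j = A i := by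
    intro j
    obtain ⟨i, hi⟩ := step2 j
    obtain ⟨j', hj'⟩ := step1 i
    obtain rfl := collapse' j j' (hi.trans hj')
    exact ⟨i, hi.antisymm hj'⟩
  have hrange : Set.range A = Set.range A' := by
    ext S
    constructor
    · rintro ⟨i, rfl⟩; obtain ⟨j, hj⟩ := key i; exact ⟨j, hj.symm⟩
    · rintro ⟨j, rfl⟩; obtain ⟨i, hi⟩ := key' j; exact ⟨i, hi.symm⟩
  refine ⟨hrange, ?_⟩
  have hinjA : Function.Injective A := fun i i' h => collapse i i' h.le
  have hinjA' : Function.Injective A' := fun j j' h => collapse' j j' h.le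
  have : Nat.card (Set.range A) = Nat.card (Set.range A') := by rw [hrange]
  rwa [Nat.card_range_of_injective hinjA, Nat.card_range_of_injective hinjA',
    Nat.card_eq_fintype_card, Nat.card_eq_fintype_card, Fintype.card_fin,
    Fintype.card_fin] at this
end

section
/- Let Ω be a Hausdorff space, 𝒜 a collection of nonempty closed Borel subsets of Ω, ⊥ an 𝒜-separation relation, and (Q_A)_{A∈𝒜} a family of inner regular Borel probability measures on Ω satisfying fittedness (supp Q_A = A for all A ∈ 𝒜) and flatness (for all A, A′ ∈ 𝒜 with A ⊆ A′, either Q_{A′}(A) = 0 or Q_A(B) = Q_{A′}(B ∩ A)/Q_{A′}(A) for every Borel set B). Suppose F and F′ are finite ⊥-forests with values in 𝒜 (i.e., finite subsets of 𝒜 such that any two elements are either ⊥-separated or one is contained in the other) and α : F → (0, ∞), α′ : F′ → (0, ∞) are such that Σ_{A∈F} α(A)·Q_A = Σ_{A∈F′} α′(A)·Q_A as measures. Then F = F′ and α(A) = α′(A) for all A ∈ F; moreover, the support of this measure equals ⋃_{A∈F} A. -/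
open MeasureTheory
open scoped NNReal ENNReal

/-- The support of a measure on a topological space: the complement of the union of all open
null sets. -/
def msupport {Ω : Type*} [TopologicalSpace Ω] [MeasurableSpace Ω]
    (μ : Measure Ω) : Set Ω :=
  (⋃₀ {O : Set Ω | IsOpen O ∧ μ O = 0})ᶜ

section Aux
variable {Ω : Type*} [TopologicalSpace Ω] [MeasurableSpace Ω]

lemma msupport_zero : msupport (0 : Measure Ω) = ∅ := by
  have h : (Set.univ : Set Ω) ⊆ ⋃₀ {O : Set Ω | IsOpen O ∧ (0 : Measure Ω) O = 0} := by
    intro x _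
    exact ⟨Set.univ, ⟨isOpen_univ, by simp⟩, trivial⟩
  simp only [msupport,
    show (⋃₀ {O : Set Ω | IsOpen O ∧ (0 : Measure Ω) O = 0}) = Set.univ from
      Set.eq_univ_of_univ_subset h, Set.compl_univ]

lemma msupport_add (μ ν : Measure Ω) : msupport (μ + ν) = msupport μ ∪ msupport ν := by
  simp only [msupport, ← Set.compl_inter]
  congr 1
  ext x
  constructor
  · rintro ⟨O, ⟨hO, hO0⟩, hx⟩
    simp only [Measure.add_apply, add_eq_zero] at hO0
    exact ⟨⟨O, ⟨hO, hO0.1⟩, hx⟩, ⟨O, ⟨hO, hO0.2⟩, hx⟩⟩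
  · rintro ⟨⟨O₁, ⟨h1, h10⟩, hx1⟩, ⟨O₂, ⟨h2, h20⟩, hx2⟩⟩
    refine ⟨O₁ ∩ O₂, ⟨h1.inter h2, ?_⟩, hx1, hx2⟩
    have hle : (μ + ν) (O₁ ∩ O₂) ≤ 0 := by
      rw [Measure.add_apply]
      have a1 : μ (O₁ ∩ O₂) = 0 := measure_mono_null Set.inter_subset_left h10
      have a2 : ν (O₁ ∩ O₂) = 0 := measure_mono_null Set.inter_subset_right h20
      simp [a1, a2]
    exact le_antisymm hle (zero_le)

lemma msupport_smul (c : ℝ≥0∞) (hc : c ≠ 0) (μ : Measure Ω) :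
    msupport (c • μ) = msupport μ := by
  simp only [msupport]
  congr 1
  ext O
  simp only [Set.mem_setOf_eq, Measure.smul_apply, smul_eq_mul, mul_eq_zero, hc, false_or]

lemma msupport_sum {ι : Type*} (F : Finset ι) (f : ι → Measure Ω) :
    msupport (∑ i ∈ F, f i) = ⋃ i ∈ F, msupport (f i) := by
  classical
  induction F using Finset.induction_on with
  | empty => simp [msupport_zero]
  | insert _ _ h ih =>
    rw [Finset.sum_insert h, msupport_add, ih]
    simp

variable [OpensMeasurableSpace Ω]

lemma null_compl_msupport (μ : Measure Ω) (hreg : μ.InnerRegular) :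
    μ (msupport μ)ᶜ = 0 := by
  set S : Set (Set Ω) := {O : Set Ω | IsOpen O ∧ μ O = 0} with hS
  have hU : IsOpen (⋃₀ S) := isOpen_sUnion (fun O hO => hO.1)
  have hmeas : MeasurableSet (⋃₀ S) := hU.measurableSet
  by_contra h
  have hpos : 0 < μ (⋃₀ S) := by
    simp only [msupport, compl_compl] at h
    exact pos_iff_ne_zero.mpr h
  obtain ⟨K, hKU, hKc, hKpos⟩ := hreg.innerRegular hmeas 0 hpos
  have hcover : K ⊆ ⋃ O : S, (O : Set Ω) := by
    rwa [← Set.sUnion_eq_iUnion]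
  obtain ⟨t, ht⟩ := hKc.elim_finite_subcover (fun O : S => (O : Set Ω))
    (fun O => O.2.1) hcover
  have hK0 : μ K = 0 := by
    refine measure_mono_null ht (le_antisymm ?_ (zero_le))
    calc μ (⋃ i ∈ t, (i : Set Ω)) ≤ ∑ i ∈ t, μ (i : Set Ω) := measure_biUnion_finset_le t _
    _ = 0 := Finset.sum_eq_zero (fun i _ => i.2.2)
  simp [hK0] at hKpos

lemma msupport_subset_of_closed {μ : Measure Ω} {C : Set Ω} (hC : IsClosed C)
    (h : μ Cᶜ = 0) : msupport μ ⊆ C := by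
  have h2 : Cᶜ ⊆ ⋃₀ {O : Set Ω | IsOpen O ∧ μ O = 0} :=
    Set.subset_sUnion_of_mem ⟨hC.isOpen_compl, h⟩
  rw [msupport]
  calc (⋃₀ {O : Set Ω | IsOpen O ∧ μ O = 0})ᶜ ⊆ (Cᶜ)ᶜ := Set.compl_subset_compl.mpr h2
  _ = C := compl_compl C

end Aux

section Perp
variable {Ω : Type*}

lemma perp_inter_eq_empty (perp : Set Ω → Set Ω → Prop)
    (hsymm : ∀ A B : Set Ω, perp A B → perp B A)
    (hrefl : ∀ B : Set Ω, perp B B → B = ∅)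
    (hmono : ∀ A A' B : Set Ω, A ⊆ A' → perp A' B → perp A B)
    {A B : Set Ω} (h : perp A B) : A ∩ B = ∅ := by
  by_contra hne
  obtain ⟨x, hxA, hxB⟩ := Set.nonempty_iff_ne_empty.mpr hne
  have h1 : perp {x} B := hmono _ _ _ (Set.singleton_subset_iff.mpr hxA) h
  have h2 : perp {x} {x} := hmono _ _ _ (Set.singleton_subset_iff.mpr hxB) (hsymm _ _ h1)
  exact Set.singleton_ne_empty x (hrefl _ h2)

lemma finset_exists_max (F : Finset (Set Ω)) {A : Set Ω} (hA : A ∈ F) :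
    ∃ B ∈ F, A ⊆ B ∧ ∀ C ∈ F, B ⊆ C → B = C := by
  classical
  obtain ⟨m, hm', hmax'⟩ := Finset.exists_maximal (s := F.filter (fun B => A ⊆ B))
    ⟨A, Finset.mem_filter.mpr ⟨hA, subset_rfl⟩⟩
  have hm := hm'
  have hmax : ∀ C ∈ F.filter (fun B => A ⊆ B), ¬ m < C :=
    fun C hC hlt => hlt.2 (hmax' hC hlt.1)
  rw [Finset.mem_filter] at hm
  refine ⟨m, hm.1, hm.2, fun C hC hmC => ?_⟩
  by_contra hne
  exact hmax C (Finset.mem_filter.mpr ⟨hC, hm.2.trans hmC⟩) (lt_of_le_of_ne hmC hne)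

lemma subset_of_mem_perp_cover [TopologicalSpace Ω] (𝒜 : Set (Set Ω)) (perp : Set Ω → Set Ω → Prop)
    (hconn : ∀ A ∈ 𝒜, ∀ (k : ℕ) (B : Fin k → Set Ω), (∀ i, IsClosed (B i)) →
      (∀ i j, i ≠ j → perp (B i) (B j)) → A ⊆ ⋃ i, B i → ∃ i, A ⊆ B i)
    {A : Set Ω} (hA𝒜 : A ∈ 𝒜) (G : Finset (Set Ω))
    (hGc : ∀ B ∈ G, IsClosed B)
    (hGp : ∀ B ∈ G, ∀ C ∈ G, B ≠ C → perp B C)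
    (hcov : A ⊆ ⋃ B ∈ G, B) : ∃ B ∈ G, A ⊆ B := by
  classical
  let e := G.equivFin
  obtain ⟨i, hi⟩ := hconn A hA𝒜 G.card (fun i => ((e.symm i : G) : Set Ω))
    (fun i => hGc _ (e.symm i).2)
    (fun i j hij => hGp _ (e.symm i).2 _ (e.symm j).2 (by
      intro hval
      exact hij (by
        have : e.symm i = e.symm j := Subtype.ext hval
        simpa using congrArg e this)))
    (by
      intro x hx
      obtain ⟨B, hBG, hxB⟩ := Set.mem_iUnion₂.mp (hcov hx)
      refine Set.mem_iUnion.mpr ⟨e ⟨B, hBG⟩, ?_⟩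
      simpa using hxB)
  exact ⟨_, (e.symm i).2, hi⟩

end Perp

section Prob
variable {Ω : Type*} [TopologicalSpace Ω] [MeasurableSpace Ω] [OpensMeasurableSpace Ω]

lemma Q_compl_zero {Q : Measure Ω} {A : Set Ω} (hreg : Q.InnerRegular)
    (hfit : msupport Q = A) : Q Aᶜ = 0 := by
  have := null_compl_msupport Q hreg
  rwa [hfit] at this

lemma Q_self_one {Q : Measure Ω} {A : Set Ω} [IsProbabilityMeasure Q]
    (hreg : Q.InnerRegular) (hfit : msupport Q = A) : Q A = 1 := by
  have h0 : Q Aᶜ = 0 := Q_compl_zero hreg hfit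
  have h1 : (1 : ℝ≥0∞) = Q (A ∪ Aᶜ) := by rw [Set.union_compl_self]; simp
  refine le_antisymm prob_le_one ?_
  calc (1 : ℝ≥0∞) = Q (A ∪ Aᶜ) := h1
  _ ≤ Q A + Q Aᶜ := measure_union_le _ _
  _ = Q A := by rw [h0, add_zero]

lemma Q_eq_one_of_subset {Q : Measure Ω} {A E : Set Ω} [IsProbabilityMeasure Q]
    (hreg : Q.InnerRegular) (hfit : msupport Q = A) (hAE : A ⊆ E) : Q E = 1 :=
  le_antisymm prob_le_one (Q_self_one hreg hfit ▸ measure_mono hAE)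

lemma Q_zero_of_disjoint {Q : Measure Ω} {A E : Set Ω}
    (hreg : Q.InnerRegular) (hfit : msupport Q = A) (hdisj : E ∩ A = ∅) : Q E = 0 :=
  measure_mono_null (by
    intro x hx
    intro hxA
    exact absurd hdisj (Set.nonempty_iff_ne_empty.mp ⟨x, hx, hxA⟩)) (Q_compl_zero hreg hfit)

lemma subset_of_Q_one {Q : Measure Ω} {A C : Set Ω} [IsProbabilityMeasure Q]
    (hreg : Q.InnerRegular) (hfit : msupport Q = A) (hC : IsClosed C) (h1 : Q C = 1) :
    A ⊆ C := by
  have h0 : Q Cᶜ = 0 := (prob_compl_eq_zero_iff hC.measurableSet).mpr h1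
  rw [← hfit]
  exact msupport_subset_of_closed hC h0

end Prob

section Main
variable {Ω : Type*} [TopologicalSpace Ω] [T2Space Ω] [MeasurableSpace Ω] [BorelSpace Ω]

open scoped Classical

/-- Evaluation of the simple measure on measurable subsets of a maximal forest element. -/
lemma eval_on_subset
    (𝒜 : Set (Set Ω))
    (h𝒜 : ∀ A ∈ 𝒜, A.Nonempty ∧ IsClosed A ∧ MeasurableSet A)
    (perp : Set Ω → Set Ω → Prop)
    (hsymm : ∀ A B : Set Ω, perp A B → perp B A)
    (hrefl : ∀ B : Set Ω, perp B B → B = ∅)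
    (hmono : ∀ A A' B : Set Ω, A ⊆ A' → perp A' B → perp A B)
    (hconn : ∀ A ∈ 𝒜, ∀ (k : ℕ) (B : Fin k → Set Ω), (∀ i, IsClosed (B i)) →
      (∀ i j, i ≠ j → perp (B i) (B j)) → A ⊆ ⋃ i, B i → ∃ i, A ⊆ B i)
    (Q : Set Ω → Measure Ω)
    (hQprob : ∀ A ∈ 𝒜, IsProbabilityMeasure (Q A))
    (hQreg : ∀ A ∈ 𝒜, (Q A).InnerRegular)
    (hfit : ∀ A ∈ 𝒜, msupport (Q A) = A)
    (F : Finset (Set Ω)) (hF𝒜 : ∀ A ∈ F, A ∈ 𝒜)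
    (hFforest : ∀ A ∈ F, ∀ A' ∈ F, perp A A' ∨ A ⊆ A' ∨ A' ⊆ A)
    (α : Set Ω → ℝ≥0) {A : Set Ω} (hA : A ∈ F)
    (hmax : ∀ C ∈ F, A ⊆ C → A = C)
    {E : Set Ω} (hEA : E ⊆ A) :
    (∑ B ∈ F, ((α B : ℝ≥0∞) • Q B)) E
      = (α A : ℝ≥0∞) * Q A E
        + ∑ B ∈ (F.erase A).filter (fun B => B ⊆ A), (α B : ℝ≥0∞) * Q B E := by
  have hsum : (∑ B ∈ F, ((α B : ℝ≥0∞) • Q B)) E = ∑ B ∈ F, (α B : ℝ≥0∞) * Q B E := by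
    rw [Measure.finset_sum_apply]
    exact Finset.sum_congr rfl (fun B _ => by rw [Measure.smul_apply, smul_eq_mul])
  rw [hsum, ← Finset.add_sum_erase _ _ hA]
  congr 1
  rw [← Finset.sum_filter_add_sum_filter_not (F.erase A) (fun B => B ⊆ A)]
  have h0 : ∀ B ∈ (F.erase A).filter (fun B => ¬ B ⊆ A), (α B : ℝ≥0∞) * Q B E = 0 := by
    intro B hB
    simp only [Finset.mem_filter, Finset.mem_erase] at hB
    obtain ⟨⟨hne, hBF⟩, hnsub⟩ := hB
    have hperp : perp A B := by
      rcases hFforest A hA B hBF with h | h | h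
      · exact h
      · exact absurd (hmax B hBF h).symm hne
      · exact absurd h hnsub
    have hAB : A ∩ B = ∅ := perp_inter_eq_empty perp hsymm hrefl hmono hperp
    have hEB : E ∩ B = ∅ := by
      apply Set.eq_empty_of_subset_empty
      rw [← hAB]
      exact Set.inter_subset_inter_left _ hEA
    have hq : Q B E = 0 := Q_zero_of_disjoint (hQreg B (hF𝒜 B hBF)) (hfit B (hF𝒜 B hBF))
      (by rw [Set.inter_comm] at hEB ⊢; exact hEB)
    rw [hq, mul_zero]
  rw [Finset.sum_eq_zero h0, add_zero]

/-- Coefficients at common maximal elements cannot differ (one direction). -/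
lemma coeff_not_lt
    (𝒜 : Set (Set Ω))
    (h𝒜 : ∀ A ∈ 𝒜, A.Nonempty ∧ IsClosed A ∧ MeasurableSet A)
    (perp : Set Ω → Set Ω → Prop)
    (hsymm : ∀ A B : Set Ω, perp A B → perp B A)
    (hrefl : ∀ B : Set Ω, perp B B → B = ∅)
    (hmono : ∀ A A' B : Set Ω, A ⊆ A' → perp A' B → perp A B)
    (hconn : ∀ A ∈ 𝒜, ∀ (k : ℕ) (B : Fin k → Set Ω), (∀ i, IsClosed (B i)) →
      (∀ i j, i ≠ j → perp (B i) (B j)) → A ⊆ ⋃ i, B i → ∃ i, A ⊆ B i)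
    (Q : Set Ω → Measure Ω)
    (hQprob : ∀ A ∈ 𝒜, IsProbabilityMeasure (Q A))
    (hQreg : ∀ A ∈ 𝒜, (Q A).InnerRegular)
    (hfit : ∀ A ∈ 𝒜, msupport (Q A) = A)
    (F F' : Finset (Set Ω)) (hF𝒜 : ∀ A ∈ F, A ∈ 𝒜) (hF'𝒜 : ∀ A ∈ F', A ∈ 𝒜)
    (hFforest : ∀ A ∈ F, ∀ A' ∈ F, perp A A' ∨ A ⊆ A' ∨ A' ⊆ A)
    (hF'forest : ∀ A ∈ F', ∀ A' ∈ F', perp A A' ∨ A ⊆ A' ∨ A' ⊆ A)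
    (α α' : Set Ω → ℝ≥0)
    (heq : ∑ A ∈ F, ((α A : ℝ≥0∞) • Q A) = ∑ A ∈ F', ((α' A : ℝ≥0∞) • Q A))
    {A : Set Ω} (hAF : A ∈ F) (hAF' : A ∈ F')
    (hmaxF : ∀ C ∈ F, A ⊆ C → A = C) (hmaxF' : ∀ C ∈ F', A ⊆ C → A = C) :
    ¬ (α A < α' A) := by
  intro hlt
  have hA𝒜 := hF𝒜 A hAF
  obtain ⟨hAne, hAcl, hAm⟩ := h𝒜 A hA𝒜
  haveI := hQprob A hA𝒜
  set FA := (F.erase A).filter (fun B => B ⊆ A) with hFAdef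
  set F'A := (F'.erase A).filter (fun B => B ⊆ A) with hF'Adef
  have hFAsub : ∀ B ∈ FA, B ∈ F ∧ B ≠ A ∧ B ⊆ A := by
    intro B hB
    simp only [hFAdef, Finset.mem_filter, Finset.mem_erase] at hB
    exact ⟨hB.1.2, hB.1.1, hB.2⟩
  have hF'Asub : ∀ B ∈ F'A, B ∈ F' ∧ B ≠ A ∧ B ⊆ A := by
    intro B hB
    simp only [hF'Adef, Finset.mem_filter, Finset.mem_erase] at hB
    exact ⟨hB.1.2, hB.1.1, hB.2⟩
  set S : Set Ω := ⋃ B ∈ FA, B with hSdef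
  have hSA : S ⊆ A := Set.iUnion₂_subset (fun B hB => (hFAsub B hB).2.2)
  have hScl : IsClosed S :=
    Set.Finite.isClosed_biUnion (FA.finite_toSet)
      (fun B hB => (h𝒜 B (hF𝒜 B (hFAsub B hB).1)).2.1)
  have hq1 : ∀ B ∈ FA, Q B S = 1 := by
    intro B hB
    have hB𝒜 := hF𝒜 B (hFAsub B hB).1
    haveI := hQprob B hB𝒜
    exact Q_eq_one_of_subset (hQreg B hB𝒜) (hfit B hB𝒜)
      (fun y hy => Set.mem_biUnion hB hy)
  have hq1A : ∀ B ∈ FA, Q B A = 1 := by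
    intro B hB
    have hB𝒜 := hF𝒜 B (hFAsub B hB).1
    haveI := hQprob B hB𝒜
    exact Q_eq_one_of_subset (hQreg B hB𝒜) (hfit B hB𝒜) (hFAsub B hB).2.2
  have hq1A' : ∀ B ∈ F'A, Q B A = 1 := by
    intro B hB
    have hB𝒜 := hF'𝒜 B (hF'Asub B hB).1
    haveI := hQprob B hB𝒜
    exact Q_eq_one_of_subset (hQreg B hB𝒜) (hfit B hB𝒜) (hF'Asub B hB).2.2
  have hQAA : Q A A = 1 := Q_self_one (hQreg A hA𝒜) (hfit A hA𝒜)
  set a : ℝ≥0∞ := (α A : ℝ≥0∞) with hadef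
  set a' : ℝ≥0∞ := (α' A : ℝ≥0∞) with ha'def
  set x : ℝ≥0∞ := Q A S with hxdef
  set L : ℝ≥0∞ := ∑ B ∈ FA, (α B : ℝ≥0∞) with hLdef
  set R' : ℝ≥0∞ := ∑ B ∈ F'A, (α' B : ℝ≥0∞) with hR'def
  set R : ℝ≥0∞ := ∑ B ∈ F'A, (α' B : ℝ≥0∞) * Q B S with hRdef
  have eqA : a + L = a' + R' := by
    have e1 := eval_on_subset 𝒜 h𝒜 perp hsymm hrefl hmono hconn Q hQprob hQreg hfit
      F hF𝒜 hFforest α hAF hmaxF (subset_rfl : A ⊆ A)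
    have e2 := eval_on_subset 𝒜 h𝒜 perp hsymm hrefl hmono hconn Q hQprob hQreg hfit
      F' hF'𝒜 hF'forest α' hAF' hmaxF' (subset_rfl : A ⊆ A)
    rw [heq, e2] at e1
    rw [hQAA, ← hFAdef, ← hF'Adef] at e1
    simp only [mul_one] at e1
    have hs1 : ∑ B ∈ FA, (α B : ℝ≥0∞) * Q B A = ∑ B ∈ FA, (α B : ℝ≥0∞) :=
      Finset.sum_congr rfl (fun B hB => by rw [hq1A B hB, mul_one])
    have hs2 : ∑ B ∈ F'A, (α' B : ℝ≥0∞) * Q B A = ∑ B ∈ F'A, (α' B : ℝ≥0∞) :=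
      Finset.sum_congr rfl (fun B hB => by rw [hq1A' B hB, mul_one])
    rw [hs1, hs2] at e1
    exact e1.symm
  have eqS : a * x + L = a' * x + R := by
    have e1 := eval_on_subset 𝒜 h𝒜 perp hsymm hrefl hmono hconn Q hQprob hQreg hfit
      F hF𝒜 hFforest α hAF hmaxF hSA
    have e2 := eval_on_subset 𝒜 h𝒜 perp hsymm hrefl hmono hconn Q hQprob hQreg hfit
      F' hF'𝒜 hF'forest α' hAF' hmaxF' hSA
    rw [heq, e2] at e1
    rw [← hFAdef, ← hF'Adef] at e1
    have hs1 : ∑ B ∈ FA, (α B : ℝ≥0∞) * Q B S = ∑ B ∈ FA, (α B : ℝ≥0∞) :=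
      Finset.sum_congr rfl (fun B hB => by rw [hq1 B hB, mul_one])
    rw [hs1] at e1
    exact e1.symm
  have hRtop : R ≠ ⊤ := by
    rw [hRdef]
    refine (ENNReal.sum_lt_top.mpr (fun B hB => ?_)).ne
    haveI := hQprob B (hF'𝒜 B (hF'Asub B hB).1)
    exact ENNReal.mul_lt_top ENNReal.coe_lt_top (measure_lt_top _ _)
  have hatop : a ≠ ⊤ := ENNReal.coe_ne_top
  have hxle : x ≤ 1 := prob_le_one
  have hRR' : R ≤ R' := by
    rw [hRdef, hR'def]
    refine Finset.sum_le_sum (fun B hB => ?_)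
    haveI := hQprob B (hF'𝒜 B (hF'Asub B hB).1)
    calc (α' B : ℝ≥0∞) * Q B S ≤ (α' B : ℝ≥0∞) * 1 := mul_le_mul_right prob_le_one _
    _ = (α' B : ℝ≥0∞) := mul_one _
  have h1 : a' + R' + a * x = a + a' * x + R := by
    calc a' + R' + a * x = (a + L) + a * x := by rw [eqA]
    _ = a + (a * x + L) := by ring
    _ = a + (a' * x + R) := by rw [eqS]
    _ = a + a' * x + R := by ring
  have key : a' + a * x ≤ a + a' * x := by
    have h2 : a' + a * x + R ≤ a + a' * x + R := by
      calc a' + a * x + R ≤ a' + a * x + R' := by gcongr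
      _ = a' + R' + a * x := by ring
      _ = a + a' * x + R := h1
    exact (WithTop.add_le_add_iff_right hRtop).mp h2
  -- deduce x = 1
  set c : ℝ≥0∞ := a' - a with hcdef
  have hlt' : a < a' := by
    rw [hadef, ha'def]
    exact_mod_cast hlt
  have hac : a + c = a' := by
    rw [hcdef, add_comm]
    exact tsub_add_cancel_of_le hlt'.le
  have hc0 : c ≠ 0 := by
    rw [hcdef]
    exact (tsub_pos_iff_lt.mpr hlt').ne'
  have hctop : c ≠ ⊤ := by
    rw [hcdef, ha'def]
    exact ((tsub_le_self).trans_lt ENNReal.coe_lt_top).ne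
  have key2 : (a + a * x) + c ≤ (a + a * x) + c * x := by
    calc (a + a * x) + c = (a + c) + a * x := by ring
    _ = a' + a * x := by rw [hac]
    _ ≤ a + a' * x := key
    _ = a + (a + c) * x := by rw [hac]
    _ = (a + a * x) + c * x := by ring
  have haax : a + a * x ≠ ⊤ := by
    refine ENNReal.add_ne_top.mpr ⟨hatop, ?_⟩
    exact (ENNReal.mul_lt_top ENNReal.coe_lt_top (lt_of_le_of_lt hxle (by norm_num))).ne
  have hcx : c ≤ c * x := (ENNReal.add_le_add_iff_left haax).mp key2
  have hx1 : (1 : ℝ≥0∞) ≤ x := by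
    rw [← ENNReal.mul_le_mul_iff_right hc0 hctop, mul_one]
    exact hcx
  have hxeq : Q A S = 1 := le_antisymm hxle hx1
  -- hence A is contained in S, the union of its proper subelements in F
  have hAS : A ⊆ S := subset_of_Q_one (hQreg A hA𝒜) (hfit A hA𝒜) hScl hxeq
  -- cover A by the maximal elements of FA and derive a contradiction
  set G := FA.filter (fun B => ∀ C ∈ FA, B ⊆ C → B = C) with hGdef
  have hGsub : ∀ B ∈ G, B ∈ FA := fun B hB => (Finset.mem_filter.mp hB).1
  have hGmax : ∀ B ∈ G, ∀ C ∈ FA, B ⊆ C → B = C := fun B hB => (Finset.mem_filter.mp hB).2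
  have hGc : ∀ B ∈ G, IsClosed B :=
    fun B hB => (h𝒜 B (hF𝒜 B (hFAsub B (hGsub B hB)).1)).2.1
  have hGp : ∀ B ∈ G, ∀ C ∈ G, B ≠ C → perp B C := by
    intro B hB C hC hne
    rcases hFforest B (hFAsub B (hGsub B hB)).1 C (hFAsub C (hGsub C hC)).1 with h | h | h
    · exact h
    · exact absurd (hGmax B hB C (hGsub C hC) h) hne
    · exact absurd (hGmax C hC B (hGsub B hB) h).symm hne
  have hcov : A ⊆ ⋃ B ∈ G, B := by
    intro y hy
    obtain ⟨B, hBFA, hyB⟩ := Set.mem_iUnion₂.mp (hAS hy)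
    obtain ⟨Bm, hBm, hBBm, hBmmax⟩ := finset_exists_max FA hBFA
    have hBmG : Bm ∈ G := Finset.mem_filter.mpr ⟨hBm, hBmmax⟩
    exact Set.mem_iUnion₂.mpr ⟨Bm, hBmG, hBBm hyB⟩
  obtain ⟨B, hBG, hABB⟩ := subset_of_mem_perp_cover 𝒜 perp hconn hA𝒜 G hGc hGp hcov
  have hBA := (hFAsub B (hGsub B hBG)).2.2
  exact (hFAsub B (hGsub B hBG)).2.1 (le_antisymm hBA hABB)

/-- The maximal elements of a finite family of sets. -/
noncomputable def maxSet (F : Finset (Set Ω)) : Finset (Set Ω) :=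
  F.filter (fun A => ∀ C ∈ F, A ⊆ C → A = C)

lemma maxSet_subset (F : Finset (Set Ω)) : maxSet F ⊆ F := Finset.filter_subset _ _

lemma mem_maxSet {F : Finset (Set Ω)} {A : Set Ω} :
    A ∈ maxSet F ↔ A ∈ F ∧ ∀ C ∈ F, A ⊆ C → A = C := Finset.mem_filter

lemma biUnion_subset_maxSet (F : Finset (Set Ω)) :
    (⋃ A ∈ F, A) ⊆ ⋃ A ∈ maxSet F, A := by
  intro x hx
  obtain ⟨B, hB, hxB⟩ := Set.mem_iUnion₂.mp hx
  obtain ⟨Bm, hBm, hBBm, hmax⟩ := finset_exists_max F hB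
  exact Set.mem_iUnion₂.mpr ⟨Bm, mem_maxSet.mpr ⟨hBm, hmax⟩, hBBm hxB⟩

lemma maxSet_perp (perp : Set Ω → Set Ω → Prop) (F : Finset (Set Ω))
    (hFforest : ∀ A ∈ F, ∀ A' ∈ F, perp A A' ∨ A ⊆ A' ∨ A' ⊆ A) :
    ∀ B ∈ maxSet F, ∀ C ∈ maxSet F, B ≠ C → perp B C := by
  intro B hB C hC hne
  rw [mem_maxSet] at hB hC
  rcases hFforest B hB.1 C hC.1 with h | h | h
  · exact h
  · exact absurd (hB.2 C hC.1 h) hne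
  · exact absurd (hC.2 B hB.1 h).symm hne

lemma maxSet_mono
    (𝒜 : Set (Set Ω))
    (h𝒜 : ∀ A ∈ 𝒜, A.Nonempty ∧ IsClosed A ∧ MeasurableSet A)
    (perp : Set Ω → Set Ω → Prop)
    (hsymm : ∀ A B : Set Ω, perp A B → perp B A)
    (hrefl : ∀ B : Set Ω, perp B B → B = ∅)
    (hmono : ∀ A A' B : Set Ω, A ⊆ A' → perp A' B → perp A B)
    (hconn : ∀ A ∈ 𝒜, ∀ (k : ℕ) (B : Fin k → Set Ω), (∀ i, IsClosed (B i)) →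
      (∀ i j, i ≠ j → perp (B i) (B j)) → A ⊆ ⋃ i, B i → ∃ i, A ⊆ B i)
    (Q : Set Ω → Measure Ω)
    (hQprob : ∀ A ∈ 𝒜, IsProbabilityMeasure (Q A))
    (hQreg : ∀ A ∈ 𝒜, (Q A).InnerRegular)
    (hfit : ∀ A ∈ 𝒜, msupport (Q A) = A)
    (F F' : Finset (Set Ω)) (hF𝒜 : ∀ A ∈ F, A ∈ 𝒜) (hF'𝒜 : ∀ A ∈ F', A ∈ 𝒜)
    (hFforest : ∀ A ∈ F, ∀ A' ∈ F, perp A A' ∨ A ⊆ A' ∨ A' ⊆ A)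
    (hF'forest : ∀ A ∈ F', ∀ A' ∈ F', perp A A' ∨ A ⊆ A' ∨ A' ⊆ A)
    (hground : (⋃ A ∈ F, A) = ⋃ A ∈ F', A) :
    maxSet F ⊆ maxSet F' := by
  intro A hA
  rw [mem_maxSet] at hA
  obtain ⟨hAF, hAmax⟩ := hA
  have hA𝒜 := hF𝒜 A hAF
  have hcov : A ⊆ ⋃ B ∈ maxSet F', B := by
    refine Set.Subset.trans ?_ (biUnion_subset_maxSet F')
    rw [← hground]
    exact fun y hy => Set.mem_biUnion hAF hy
  obtain ⟨C, hC, hAC⟩ := subset_of_mem_perp_cover 𝒜 perp hconn hA𝒜 (maxSet F')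
    (fun B hB => (h𝒜 B (hF'𝒜 B (maxSet_subset F' hB))).2.1)
    (maxSet_perp perp F' hF'forest) hcov
  have hC𝒜 := hF'𝒜 C (maxSet_subset F' hC)
  have hcov2 : C ⊆ ⋃ B ∈ maxSet F, B := by
    refine Set.Subset.trans ?_ (biUnion_subset_maxSet F)
    rw [hground]
    exact fun y hy => Set.mem_biUnion (maxSet_subset F' hC) hy
  obtain ⟨D, hD, hCD⟩ := subset_of_mem_perp_cover 𝒜 perp hconn hC𝒜 (maxSet F)
    (fun B hB => (h𝒜 B (hF𝒜 B (maxSet_subset F hB))).2.1)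
    (maxSet_perp perp F hFforest) hcov2
  have hAD : A = D := hAmax D (maxSet_subset F hD) (hAC.trans hCD)
  have hAeqC : A = C := le_antisymm hAC (hAD ▸ hCD)
  rw [hAeqC]
  exact hC

lemma ground_eq
    (𝒜 : Set (Set Ω))
    (h𝒜 : ∀ A ∈ 𝒜, A.Nonempty ∧ IsClosed A ∧ MeasurableSet A)
    (perp : Set Ω → Set Ω → Prop)
    (hsymm : ∀ A B : Set Ω, perp A B → perp B A)
    (hrefl : ∀ B : Set Ω, perp B B → B = ∅)
    (hmono : ∀ A A' B : Set Ω, A ⊆ A' → perp A' B → perp A B)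
    (hconn : ∀ A ∈ 𝒜, ∀ (k : ℕ) (B : Fin k → Set Ω), (∀ i, IsClosed (B i)) →
      (∀ i j, i ≠ j → perp (B i) (B j)) → A ⊆ ⋃ i, B i → ∃ i, A ⊆ B i)
    (Q : Set Ω → Measure Ω)
    (hQprob : ∀ A ∈ 𝒜, IsProbabilityMeasure (Q A))
    (hQreg : ∀ A ∈ 𝒜, (Q A).InnerRegular)
    (hfit : ∀ A ∈ 𝒜, msupport (Q A) = A)
    (F : Finset (Set Ω)) (hF𝒜 : ∀ A ∈ F, A ∈ 𝒜)
    (α : Set Ω → ℝ≥0) (hα : ∀ A ∈ F, 0 < α A) :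
    msupport (∑ A ∈ F, ((α A : ℝ≥0∞) • Q A)) = ⋃ A ∈ F, A := by
  rw [msupport_sum]
  exact Set.iUnion₂_congr (fun A hA => by
    rw [msupport_smul _ (by exact_mod_cast (hα A hA).ne') (Q A), hfit A (hF𝒜 A hA)])

lemma rep_unique
    (𝒜 : Set (Set Ω))
    (h𝒜 : ∀ A ∈ 𝒜, A.Nonempty ∧ IsClosed A ∧ MeasurableSet A)
    (perp : Set Ω → Set Ω → Prop)
    (hsymm : ∀ A B : Set Ω, perp A B → perp B A)
    (hrefl : ∀ B : Set Ω, perp B B → B = ∅)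
    (hmono : ∀ A A' B : Set Ω, A ⊆ A' → perp A' B → perp A B)
    (hconn : ∀ A ∈ 𝒜, ∀ (k : ℕ) (B : Fin k → Set Ω), (∀ i, IsClosed (B i)) →
      (∀ i j, i ≠ j → perp (B i) (B j)) → A ⊆ ⋃ i, B i → ∃ i, A ⊆ B i)
    (Q : Set Ω → Measure Ω)
    (hQprob : ∀ A ∈ 𝒜, IsProbabilityMeasure (Q A))
    (hQreg : ∀ A ∈ 𝒜, (Q A).InnerRegular)
    (hfit : ∀ A ∈ 𝒜, msupport (Q A) = A)
    : ∀ n : ℕ, ∀ F F' : Finset (Set Ω), ∀ α α' : Set Ω → ℝ≥0,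
    (∀ A ∈ F, A ∈ 𝒜) → (∀ A ∈ F', A ∈ 𝒜) →
    (∀ A ∈ F, ∀ A' ∈ F, perp A A' ∨ A ⊆ A' ∨ A' ⊆ A) →
    (∀ A ∈ F', ∀ A' ∈ F', perp A A' ∨ A ⊆ A' ∨ A' ⊆ A) →
    (∀ A ∈ F, 0 < α A) → (∀ A ∈ F', 0 < α' A) →
    F.card + F'.card ≤ n →
    (∑ A ∈ F, ((α A : ℝ≥0∞) • Q A)) = (∑ A ∈ F', ((α' A : ℝ≥0∞) • Q A)) →
    F = F' ∧ ∀ A ∈ F, α A = α' A := by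
  intro n
  induction n with
  | zero =>
    intro F F' α α' _ _ _ _ _ _ hcard _
    have hF : F = ∅ := Finset.card_eq_zero.mp (by omega)
    have hF' : F' = ∅ := Finset.card_eq_zero.mp (by omega)
    exact ⟨hF.trans hF'.symm, by simp [hF]⟩
  | succ n ih =>
    intro F F' α α' hF𝒜 hF'𝒜 hFforest hF'forest hα hα' hcard heq
    -- a measure-zero / total-mass helper
    have htotal : ∀ (G : Finset (Set Ω)) (β : Set Ω → ℝ≥0), (∀ A ∈ G, A ∈ 𝒜) →
        (∑ A ∈ G, ((β A : ℝ≥0∞) • Q A)) Set.univ = ∑ A ∈ G, (β A : ℝ≥0∞) := by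
      intro G β hG𝒜
      rw [Measure.finset_sum_apply]
      refine Finset.sum_congr rfl (fun A hA => ?_)
      haveI := hQprob A (hG𝒜 A hA)
      rw [Measure.smul_apply, smul_eq_mul, measure_univ, mul_one]
    by_cases hFe : F = ∅
    · subst hFe
      have h0 : (0 : ℝ≥0∞) = ∑ A ∈ F', (α' A : ℝ≥0∞) := by
        have h : ((∑ A ∈ (∅ : Finset (Set Ω)), ((α A : ℝ≥0∞) • Q A)) Set.univ)
            = (∑ A ∈ F', ((α' A : ℝ≥0∞) • Q A)) Set.univ := by rw [heq]
        rw [htotal F' α' hF'𝒜] at h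
        simpa using h
      have hF'e : F' = ∅ := by
        rcases F'.eq_empty_or_nonempty with h | h
        · exact h
        · obtain ⟨B, hB⟩ := h
          have hB0 : (α' B : ℝ≥0∞) = 0 :=
            (Finset.sum_eq_zero_iff.mp h0.symm) B hB
          exact absurd (by exact_mod_cast hB0) (hα' B hB).ne'
      exact ⟨hF'e.symm, by simp⟩
    by_cases hF'e : F' = ∅
    · subst hF'e
      have h0 : (0 : ℝ≥0∞) = ∑ A ∈ F, (α A : ℝ≥0∞) := by
        have h : ((∑ A ∈ F, ((α A : ℝ≥0∞) • Q A)) Set.univ)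
            = (∑ A ∈ (∅ : Finset (Set Ω)), ((α' A : ℝ≥0∞) • Q A)) Set.univ := by rw [heq]
        rw [htotal F α hF𝒜] at h
        simpa using h.symm
      exfalso
      obtain ⟨B, hB⟩ := Finset.nonempty_of_ne_empty hFe
      have hB0 : (α B : ℝ≥0∞) = 0 := (Finset.sum_eq_zero_iff.mp h0.symm) B hB
      exact absurd (by exact_mod_cast hB0) (hα B hB).ne'
    -- both nonempty
    have hground : (⋃ A ∈ F, A) = ⋃ A ∈ F', A := by
      rw [← ground_eq 𝒜 h𝒜 perp hsymm hrefl hmono hconn Q hQprob hQreg hfit F hF𝒜 α hα,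
        ← ground_eq 𝒜 h𝒜 perp hsymm hrefl hmono hconn Q hQprob hQreg hfit F' hF'𝒜 α' hα',
        heq]
    set M := maxSet F with hMdef
    have hMM' : M = maxSet F' :=
      le_antisymm
        (maxSet_mono 𝒜 h𝒜 perp hsymm hrefl hmono hconn Q hQprob hQreg hfit
          F F' hF𝒜 hF'𝒜 hFforest hF'forest hground)
        (maxSet_mono 𝒜 h𝒜 perp hsymm hrefl hmono hconn Q hQprob hQreg hfit
          F' F hF'𝒜 hF𝒜 hF'forest hFforest hground.symm)
    have hMF : M ⊆ F := maxSet_subset F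
    have hMF' : M ⊆ F' := hMM' ▸ maxSet_subset F'
    -- coefficients agree on maximal elements
    have hαM : ∀ A ∈ M, α A = α' A := by
      intro A hA
      have hAM := mem_maxSet.mp hA
      have hAM' := mem_maxSet.mp (hMM' ▸ hA : A ∈ maxSet F')
      refine le_antisymm ?_ ?_
      · exact not_lt.mp (coeff_not_lt 𝒜 h𝒜 perp hsymm hrefl hmono hconn Q hQprob hQreg hfit
          F' F hF'𝒜 hF𝒜 hF'forest hFforest α' α heq.symm hAM'.1 hAM.1 hAM'.2 hAM.2)
      · exact not_lt.mp (coeff_not_lt 𝒜 h𝒜 perp hsymm hrefl hmono hconn Q hQprob hQreg hfit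
          F F' hF𝒜 hF'𝒜 hFforest hF'forest α α' heq hAM.1 hAM'.1 hAM.2 hAM'.2)
    -- cancel the maximal part
    have hCsum : ∑ A ∈ M, ((α A : ℝ≥0∞) • Q A) = ∑ A ∈ M, ((α' A : ℝ≥0∞) • Q A) :=
      Finset.sum_congr rfl (fun A hA => by rw [hαM A hA])
    have hsplit : ∑ A ∈ F \ M, ((α A : ℝ≥0∞) • Q A) + ∑ A ∈ M, ((α A : ℝ≥0∞) • Q A)
        = ∑ A ∈ F' \ M, ((α' A : ℝ≥0∞) • Q A) + ∑ A ∈ M, ((α A : ℝ≥0∞) • Q A) := by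
      rw [Finset.sum_sdiff hMF, heq, ← Finset.sum_sdiff hMF' (f := fun A => ((α' A : ℝ≥0∞) • Q A)),
        hCsum]
    have heq2 : ∑ A ∈ F \ M, ((α A : ℝ≥0∞) • Q A) = ∑ A ∈ F' \ M, ((α' A : ℝ≥0∞) • Q A) := by
      ext s hs
      have h := congrArg (fun μ : Measure Ω => μ s) hsplit
      simp only [Measure.add_apply] at h
      have hfin : (∑ A ∈ M, ((α A : ℝ≥0∞) • Q A)) s ≠ ⊤ := by
        rw [Measure.finset_sum_apply]
        refine (ENNReal.sum_lt_top.mpr (fun A hA => ?_)).ne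
        haveI := hQprob A (hF𝒜 A (hMF hA))
        rw [Measure.smul_apply, smul_eq_mul]
        exact ENNReal.mul_lt_top ENNReal.coe_lt_top (measure_lt_top _ _)
      rw [add_comm ((∑ A ∈ F \ M, ((α A : ℝ≥0∞) • Q A)) s),
        add_comm ((∑ A ∈ F' \ M, ((α' A : ℝ≥0∞) • Q A)) s)] at h
      exact (ENNReal.add_right_inj hfin).mp h
    -- apply the induction hypothesis
    have hMne : M.Nonempty := by
      obtain ⟨A, hA⟩ := Finset.nonempty_of_ne_empty hFe
      obtain ⟨B, hB, _, hmax⟩ := finset_exists_max F hA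
      exact ⟨B, mem_maxSet.mpr ⟨hB, hmax⟩⟩
    have hcard2 : (F \ M).card + (F' \ M).card ≤ n := by
      have h1 := Finset.card_sdiff_of_subset hMF
      have h2 := Finset.card_sdiff_of_subset hMF'
      have h3 := Finset.card_le_card hMF
      have h4 := Finset.card_le_card hMF'
      have h5 : 0 < M.card := Finset.card_pos.mpr hMne
      omega
    obtain ⟨hFF, hαrest⟩ := ih (F \ M) (F' \ M) α α'
      (fun A hA => hF𝒜 A (Finset.mem_sdiff.mp hA).1)
      (fun A hA => hF'𝒜 A (Finset.mem_sdiff.mp hA).1)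
      (fun A hA B hB => hFforest A (Finset.mem_sdiff.mp hA).1 B (Finset.mem_sdiff.mp hB).1)
      (fun A hA B hB => hF'forest A (Finset.mem_sdiff.mp hA).1 B (Finset.mem_sdiff.mp hB).1)
      (fun A hA => hα A (Finset.mem_sdiff.mp hA).1)
      (fun A hA => hα' A (Finset.mem_sdiff.mp hA).1)
      hcard2 heq2
    constructor
    · calc F = F \ M ∪ M := (Finset.sdiff_union_of_subset hMF).symm
      _ = F' \ M ∪ M := by rw [hFF]
      _ = F' := Finset.sdiff_union_of_subset hMF'
    · intro A hA
      by_cases hAM : A ∈ M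
      · exact hαM A hAM
      · exact hαrest A (Finset.mem_sdiff.mpr ⟨hA, hAM⟩)

end Main

/-- Uniqueness of the representation of a simple measure on a finite `⊥`-forest,
given a clustering base `(𝒜, (Q_A), ⊥)` (separation relation, fitted and flat base measures);
moreover, the support of the simple measure is the ground of its forest. -/
theorem simple_measure_representation_unique {Ω : Type*} [TopologicalSpace Ω] [T2Space Ω]
    [MeasurableSpace Ω] [BorelSpace Ω]
    (𝒜 : Set (Set Ω))
    (h𝒜 : ∀ A ∈ 𝒜, A.Nonempty ∧ IsClosed A ∧ MeasurableSet A)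
    (perp : Set Ω → Set Ω → Prop)
    (hsymm : ∀ A B : Set Ω, perp A B → perp B A)
    (hrefl : ∀ B : Set Ω, perp B B → B = ∅)
    (hmono : ∀ A A' B : Set Ω, A ⊆ A' → perp A' B → perp A B)
    (hconn : ∀ A ∈ 𝒜, ∀ (k : ℕ) (B : Fin k → Set Ω), (∀ i, IsClosed (B i)) →
      (∀ i j, i ≠ j → perp (B i) (B j)) → A ⊆ ⋃ i, B i → ∃ i, A ⊆ B i)
    (Q : Set Ω → Measure Ω)
    (hQprob : ∀ A ∈ 𝒜, IsProbabilityMeasure (Q A))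
    (hQreg : ∀ A ∈ 𝒜, (Q A).InnerRegular)
    -- fittedness
    (hfit : ∀ A ∈ 𝒜, msupport (Q A) = A)
    -- flatness
    (hflat : ∀ A ∈ 𝒜, ∀ A' ∈ 𝒜, A ⊆ A' →
      Q A' A = 0 ∨ ∀ B : Set Ω, MeasurableSet B → Q A B = Q A' (B ∩ A) / Q A' A)
    -- two representing finite ⊥-forests with values in 𝒜
    (F F' : Finset (Set Ω))
    (hF𝒜 : ∀ A ∈ F, A ∈ 𝒜) (hF'𝒜 : ∀ A ∈ F', A ∈ 𝒜)
    (hFforest : ∀ A ∈ F, ∀ A' ∈ F, perp A A' ∨ A ⊆ A' ∨ A' ⊆ A)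
    (hF'forest : ∀ A ∈ F', ∀ A' ∈ F', perp A A' ∨ A ⊆ A' ∨ A' ⊆ A)
    (α α' : Set Ω → ℝ≥0)
    (hα : ∀ A ∈ F, 0 < α A) (hα' : ∀ A ∈ F', 0 < α' A)
    (heq : ∑ A ∈ F, ((α A : ℝ≥0∞) • Q A) = ∑ A ∈ F', ((α' A : ℝ≥0∞) • Q A)) :
    F = F' ∧ (∀ A ∈ F, α A = α' A) ∧
      msupport (∑ A ∈ F, ((α A : ℝ≥0∞) • Q A)) = ⋃ A ∈ F, A := by
  obtain ⟨h1, h2⟩ := rep_unique 𝒜 h𝒜 perp hsymm hrefl hmono hconn Q hQprob hQreg hfit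
    (F.card + F'.card) F F' α α' hF𝒜 hF'𝒜 hFforest hF'forest hα hα' le_rfl heq
  exact ⟨h1, h2, ground_eq 𝒜 h𝒜 perp hsymm hrefl hmono hconn Q hQprob hQreg hfit F hF𝒜 α hα⟩
end

section
/- Let Ω be a Hausdorff space, let P and Q₁ ≤ Q₂ ≤ … be inner regular Borel measures on Ω with Qₙ(B) increasing to P(B) for every Borel set B. Let A := supp P and B := ⋃ₙ supp Qₙ. Then B ⊆ A and P(A \ B) = 0. -/
open MeasureTheory Filter

lemma isOpen_compl_msupport {Ω : Type*} [TopologicalSpace Ω] [MeasurableSpace Ω]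
    (μ : Measure Ω) : IsOpen (msupport μ)ᶜ := by
  rw [msupport, compl_compl]
  exact isOpen_sUnion fun O hO => hO.1

lemma measure_compl_msupport {Ω : Type*} [TopologicalSpace Ω] [MeasurableSpace Ω]
    [BorelSpace Ω] (μ : Measure Ω) (hreg : μ.InnerRegular) :
    μ (msupport μ)ᶜ = 0 := by
  have hmeas : MeasurableSet (msupport μ)ᶜ := (isOpen_compl_msupport μ).measurableSet
  rw [hreg.innerRegular.measure_eq_iSup hmeas]
  simp only [ENNReal.iSup_eq_zero]
  intro K hK hKc
  rw [msupport, compl_compl] at hK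
  -- K compact subset of union of open null sets; finite subcover
  have hK' : K ⊆ ⋃ O : {O : Set Ω // IsOpen O ∧ μ O = 0}, (O : Set Ω) := by
    intro x hx
    obtain ⟨O, hO, hxO⟩ := hK hx
    exact Set.mem_iUnion.2 ⟨⟨O, hO⟩, hxO⟩
  obtain ⟨t, ht⟩ := hKc.elim_finite_subcover _ (fun O => O.2.1) hK'
  have : μ K ≤ ∑ O ∈ t, μ (O : Set Ω) :=
    le_trans (measure_mono ht) (measure_biUnion_finset_le t _)
  simpa [fun O : {O : Set Ω // IsOpen O ∧ μ O = 0} => O.2.2] using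
    le_antisymm (this.trans (le_of_eq (Finset.sum_eq_zero fun O _ => O.2.2))) zero_le

/-- If `Qₙ ↑ P` for inner regular Borel measures on a Hausdorff space, then the
union `B` of the supports of the `Qₙ` is contained in the support `A` of `P` and `P(A \ B) = 0`. -/
theorem msupport_of_monotone_approximation {Ω : Type*} [TopologicalSpace Ω] [T2Space Ω]
    [MeasurableSpace Ω] [BorelSpace Ω]
    (P : Measure Ω) (Q : ℕ → Measure Ω)
    (hPreg : P.InnerRegular) (hQreg : ∀ n, (Q n).InnerRegular)
    (hmono : Monotone Q) (hle : ∀ n, Q n ≤ P)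
    (hlim : ∀ B : Set Ω, MeasurableSet B →
      Tendsto (fun n => Q n B) atTop (nhds (P B))) :
    (⋃ n, msupport (Q n)) ⊆ msupport P ∧
      P (msupport P \ ⋃ n, msupport (Q n)) = 0 := by
  constructor
  · -- each supp Qₙ ⊆ supp P
    intro x hx
    obtain ⟨n, hn⟩ := Set.mem_iUnion.1 hx
    intro hmem
    obtain ⟨O, ⟨hO, hPO⟩, hxO⟩ := hmem
    exact hn ⟨O, ⟨hO, le_antisymm (le_trans (hle n O) hPO.le) zero_le⟩, hxO⟩
  · -- P of the complement intersection is zero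
    set N : Set Ω := ⋂ n, (msupport (Q n))ᶜ with hN
    have hNmeas : MeasurableSet N :=
      MeasurableSet.iInter fun n => (isOpen_compl_msupport (Q n)).measurableSet
    have hQN : ∀ n, Q n N = 0 := fun n =>
      le_antisymm (le_trans (measure_mono (Set.iInter_subset _ n))
        (measure_compl_msupport (Q n) (hQreg n)).le) zero_le
    have hPN : P N = 0 := by
      have := hlim N hNmeas
      simp only [hQN] at this
      exact (tendsto_nhds_unique tendsto_const_nhds this).symm
    refine le_antisymm (le_trans (measure_mono ?_) hPN.le) zero_le
    intro x hx
    simp only [Set.mem_diff, Set.mem_iUnion, not_exists] at hx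
    exact Set.mem_iInter.2 fun n => hx.2 n
end

section
/- Let Q be a finite measure on a measurable space and Q₁ ≤ Q₂ ≤ … ≤ Q be measures, with Radon–Nikodym derivatives hₙ := dQₙ/dQ. Then h₁ ≤ h₂ ≤ … ≤ 1 holds Q-almost everywhere, and the following are equivalent: (i) Qₙ(B) → Q(B) for every measurable set B; (ii) hₙ → 1 Q-almost everywhere; (iii) ∫ |1 − hₙ| dQ → 0. -/
open MeasureTheory Filter
open scoped ENNReal

/-- For a finite measure `Q` and a monotone sequence `Q₁ ≤ Q₂ ≤ … ≤ Q` with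
Radon–Nikodym derivatives `hₙ = dQₙ/dQ`, one has `h₁ ≤ h₂ ≤ … ≤ 1` `Q`-a.e., and the following
are equivalent: (i) `Qₙ(B) → Q(B)` for all measurable `B`; (ii) `hₙ → 1` `Q`-a.e.;
(iii) `∫ |1 − hₙ| dQ → 0`. -/
theorem monotone_density_convergence {Ω : Type*} [MeasurableSpace Ω]
    (Q : Measure Ω) [IsFiniteMeasure Q]
    (Qs : ℕ → Measure Ω) (hmono : Monotone Qs) (hle : ∀ n, Qs n ≤ Q) :
    (∀ n, ∀ᵐ x ∂Q, (Qs n).rnDeriv Q x ≤ 1) ∧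
    (∀ n m, n ≤ m → ∀ᵐ x ∂Q, (Qs n).rnDeriv Q x ≤ (Qs m).rnDeriv Q x) ∧
    ((∀ B : Set Ω, MeasurableSet B → Tendsto (fun n => Qs n B) atTop (nhds (Q B))) ↔
      (∀ᵐ x ∂Q, Tendsto (fun n => (Qs n).rnDeriv Q x) atTop (nhds 1))) ∧
    ((∀ᵐ x ∂Q, Tendsto (fun n => (Qs n).rnDeriv Q x) atTop (nhds 1)) ↔
      Tendsto (fun n => ∫⁻ x, (1 - (Qs n).rnDeriv Q x) ∂Q) atTop (nhds 0)) := by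
  have hfin : ∀ n, IsFiniteMeasure (Qs n) := fun n => isFiniteMeasure_of_le Q (hle n)
  have hac : ∀ n, Qs n ≪ Q := fun n => Measure.absolutelyContinuous_of_le (hle n)
  have h1 : ∀ n, ∀ᵐ x ∂Q, (Qs n).rnDeriv Q x ≤ 1 := fun n =>
    Measure.rnDeriv_le_one_of_le (hle n)
  have hset : ∀ n (s : Set Ω), MeasurableSet s →
      ∫⁻ x in s, (Qs n).rnDeriv Q x ∂Q = Qs n s := by
    intro n s hs
    have := hfin n
    exact Measure.setLIntegral_rnDeriv' (hac n) hs
  have h2 : ∀ n m, n ≤ m → ∀ᵐ x ∂Q, (Qs n).rnDeriv Q x ≤ (Qs m).rnDeriv Q x := by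
    intro n m hnm
    refine ae_le_of_forall_setLIntegral_le_of_sigmaFinite
      (Measure.measurable_rnDeriv _ _) (fun s hs _ => ?_)
    rw [hset n s hs, hset m s hs]
    exact hmono hnm s
  -- a.e. monotonicity as a single a.e. statement
  have h2' : ∀ᵐ x ∂Q, Monotone (fun n => (Qs n).rnDeriv Q x) := by
    have : ∀ᵐ x ∂Q, ∀ n : ℕ, (Qs n).rnDeriv Q x ≤ (Qs (n + 1)).rnDeriv Q x :=
      ae_all_iff.2 fun n => h2 n (n + 1) (Nat.le_succ n)
    filter_upwards [this] with x hx
    exact monotone_nat_of_le_succ hx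
  have h1' : ∀ᵐ x ∂Q, ∀ n : ℕ, (Qs n).rnDeriv Q x ≤ 1 := ae_all_iff.2 h1
  -- (ii) → (iii)
  have h23 : (∀ᵐ x ∂Q, Tendsto (fun n => (Qs n).rnDeriv Q x) atTop (nhds 1)) →
      Tendsto (fun n => ∫⁻ x, (1 - (Qs n).rnDeriv Q x) ∂Q) atTop (nhds 0) := by
    intro hii
    have h0 : (0 : ℝ≥0∞) = ∫⁻ _x, (0 : ℝ≥0∞) ∂Q := by simp
    rw [h0]
    refine tendsto_lintegral_of_dominated_convergence (fun _ => 1)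
      (fun n => measurable_const.sub (Measure.measurable_rnDeriv _ _))
      (fun n => ae_of_all _ fun x => tsub_le_self) (by simp [measure_ne_top Q]) ?_
    filter_upwards [hii] with x hx
    have : Tendsto (fun n => (1 : ℝ≥0∞) - (Qs n).rnDeriv Q x) atTop (nhds (1 - 1)) :=
      ENNReal.Tendsto.sub tendsto_const_nhds hx (Or.inl ENNReal.one_ne_top)
    simpa using this
  -- (iii) → (i)
  have h31 : Tendsto (fun n => ∫⁻ x, (1 - (Qs n).rnDeriv Q x) ∂Q) atTop (nhds 0) →
      ∀ B : Set Ω, MeasurableSet B → Tendsto (fun n => Qs n B) atTop (nhds (Q B)) := by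
    intro hiii B hB
    have key : ∀ n, Q B = Qs n B + ∫⁻ x in B, (1 - (Qs n).rnDeriv Q x) ∂Q := by
      intro n
      have : ∫⁻ x in B, ((Qs n).rnDeriv Q x + (1 - (Qs n).rnDeriv Q x)) ∂Q
          = ∫⁻ x in B, (1 : ℝ≥0∞) ∂Q := by
        refine setLIntegral_congr_fun_ae hB ?_
        filter_upwards [h1 n] with x hx _
        exact add_tsub_cancel_of_le hx
      rw [setLIntegral_one] at this
      rw [← this, lintegral_add_left (Measure.measurable_rnDeriv _ _), hset n B hB]
    have hub : ∀ n, Qs n B ≤ Q B := fun n => hle n B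
    have hlb : ∀ n, Q B - ∫⁻ x, (1 - (Qs n).rnDeriv Q x) ∂Q ≤ Qs n B := by
      intro n
      refine tsub_le_iff_right.2 ?_
      rw [key n]
      exact add_le_add le_rfl (setLIntegral_le_lintegral _ _)
    have hlim : Tendsto (fun n => Q B - ∫⁻ x, (1 - (Qs n).rnDeriv Q x) ∂Q) atTop
        (nhds (Q B)) := by
      have : Tendsto (fun n => Q B - ∫⁻ x, (1 - (Qs n).rnDeriv Q x) ∂Q) atTop
          (nhds (Q B - 0)) :=
        ENNReal.Tendsto.sub tendsto_const_nhds hiii (Or.inl (measure_ne_top Q B))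
      simpa using this
    exact tendsto_of_tendsto_of_tendsto_of_le_of_le hlim tendsto_const_nhds hlb hub
  -- (i) → (ii)
  have h12 : (∀ B : Set Ω, MeasurableSet B → Tendsto (fun n => Qs n B) atTop (nhds (Q B))) →
      ∀ᵐ x ∂Q, Tendsto (fun n => (Qs n).rnDeriv Q x) atTop (nhds 1) := by
    intro hi
    set g : Ω → ℝ≥0∞ := fun x => ⨆ n, (Qs n).rnDeriv Q x with hg
    have hglint : ∫⁻ x, g x ∂Q = Q Set.univ := by
      rw [hg]
      rw [lintegral_iSup' (fun n => (Measure.measurable_rnDeriv _ _).aemeasurable) h2']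
      have h1n : ∀ n, ∫⁻ x, (Qs n).rnDeriv Q x ∂Q = Qs n Set.univ := by
        intro n
        rw [← setLIntegral_univ, hset n Set.univ MeasurableSet.univ]
      simp_rw [h1n]
      have hmu : Monotone fun n => Qs n Set.univ := fun n m h => hmono h Set.univ
      exact tendsto_nhds_unique (tendsto_atTop_iSup hmu) (hi Set.univ MeasurableSet.univ)
    have hgle : g ≤ᵐ[Q] fun _ => 1 := by
      filter_upwards [h1'] with x hx
      exact iSup_le hx
    have hgeq : g =ᵐ[Q] fun _ => 1 := by
      refine ae_eq_of_ae_le_of_lintegral_le hgle ?_ aemeasurable_const ?_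
      · rw [hglint]; exact measure_ne_top Q _
      · rw [hglint, lintegral_one]
    filter_upwards [h2', hgeq] with x hx hgx
    have := tendsto_atTop_iSup hx
    rwa [show (⨆ n, (Qs n).rnDeriv Q x) = 1 from hgx] at this
  exact ⟨h1, h2, ⟨h12, fun h => h31 (h23 h) ⟩, ⟨h23, fun h => h12 (h31 h)⟩⟩
end
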